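/- For every fixed γ ≥ 1, the function θ_γ(r) := Q(log γ / r − r/2) − γ·Q(log γ / r + r/2) is nondecreasing in r on (0, ∞), takes values in [0, 1], and tends to 1 as r → ∞. -/

import Mathlib

open MeasureTheory ProbabilityTheory Real

/-- The standard Gaussian tail function `Q(t) = ∫_t^∞ (1/√(2π)) e^{-u²/2} du`. -/
noncomputable def gaussQ (t : ℝ) : ℝ :=
  ∫ u in Set.Ioi t, (1 / Real.sqrt (2 * π)) * Real.exp (-u ^ 2 / 2)

/-- `θ_γ(r) = Q(log γ/r − r/2) − γ·Q(log γ/r + r/2)`. -/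
noncomputable def thetaGamma (γ r : ℝ) : ℝ :=
  gaussQ (Real.log γ / r - r / 2) - γ * gaussQ (Real.log γ / r + r / 2)

open Filter

noncomputable def phi (x : ℝ) : ℝ := (1 / Real.sqrt (2 * π)) * Real.exp (-x ^ 2 / 2)
lemma phi_pos (x : ℝ) : 0 < phi x := by unfold phi; positivity
lemma phi_integrable : Integrable phi := by
  have h : Integrable (fun x : ℝ => Real.exp (-(1/2) * x ^ 2)) := integrable_exp_neg_mul_sq (by norm_num)
  have := h.const_mul (1 / Real.sqrt (2 * π))
  convert this using 2 with x
  unfold phi; ring_nf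
lemma phi_integral : ∫ x, phi x = 1 := by
  unfold phi
  rw [MeasureTheory.integral_const_mul]
  have h : ∫ x : ℝ, Real.exp (-x ^ 2 / 2) = ∫ x : ℝ, Real.exp (-(1/2) * x ^ 2) := by
    congr 1; ext x; ring_nf
  rw [h, integral_gaussian]
  have h2 : π / (1/2) = 2 * π := by ring
  rw [h2, one_div, inv_mul_cancel₀]
  positivity

lemma gaussQ_eq (t : ℝ) : gaussQ t = ∫ u in Set.Ioi t, phi u := rfl

lemma gaussQ_eq_indicator (t : ℝ) : gaussQ t = ∫ u, (Set.Ioi t).indicator phi u := by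
  rw [gaussQ_eq, integral_indicator measurableSet_Ioi]

lemma gaussQ_nonneg (t : ℝ) : 0 ≤ gaussQ t := by
  rw [gaussQ_eq]
  exact setIntegral_nonneg measurableSet_Ioi (fun x _ => (phi_pos x).le)

lemma gaussQ_le_one (t : ℝ) : gaussQ t ≤ 1 := by
  rw [gaussQ_eq, ← phi_integral]
  exact setIntegral_le_integral phi_integrable (Filter.Eventually.of_forall fun x => (phi_pos x).le)

lemma indicator_norm_le (s : Set ℝ) (a : ℝ) : ‖s.indicator phi a‖ ≤ phi a := by
  by_cases h : a ∈ s
  · rw [Set.indicator_of_mem h]; exact le_of_eq (abs_of_nonneg (phi_pos a).le)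
  · rw [Set.indicator_of_notMem h]; simpa using (phi_pos a).le

lemma gaussQ_tendsto_atTop : Tendsto gaussQ atTop (nhds 0) := by
  have h := tendsto_integral_filter_of_dominated_convergence (μ := volume) (l := atTop)
    (F := fun t : ℝ => (Set.Ioi t).indicator phi) (f := fun _ => (0:ℝ)) phi
    (Eventually.of_forall fun t => phi_integrable.aestronglyMeasurable.indicator measurableSet_Ioi)
    (Eventually.of_forall fun t => ae_of_all _ fun a => indicator_norm_le _ a)
    phi_integrable
    (ae_of_all _ fun a => ?_)
  · rw [integral_zero] at h
    exact Filter.Tendsto.congr (fun t => (gaussQ_eq_indicator t).symm) h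
  · have : ∀ᶠ t : ℝ in atTop, (Set.Ioi t).indicator phi a = 0 := by
      filter_upwards [eventually_ge_atTop a] with t ht
      exact Set.indicator_of_notMem (by simpa using ht) _
    exact Tendsto.congr' (this.mono fun t ht => ht.symm) tendsto_const_nhds

lemma gaussQ_tendsto_atBot : Tendsto gaussQ atBot (nhds 1) := by
  have h := tendsto_integral_filter_of_dominated_convergence (μ := volume) (l := atBot)
    (F := fun t : ℝ => (Set.Ioi t).indicator phi) (f := phi) phi
    (Eventually.of_forall fun t => phi_integrable.aestronglyMeasurable.indicator measurableSet_Ioi)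
    (Eventually.of_forall fun t => ae_of_all _ fun a => indicator_norm_le _ a)
    phi_integrable
    (ae_of_all _ fun a => ?_)
  · rw [phi_integral] at h
    exact Filter.Tendsto.congr (fun t => (gaussQ_eq_indicator t).symm) h
  · have : ∀ᶠ t : ℝ in atBot, (Set.Ioi t).indicator phi a = phi a := by
      filter_upwards [eventually_lt_atBot a] with t ht
      exact Set.indicator_of_mem (by simpa using ht) _
    exact Tendsto.congr' (this.mono fun t ht => ht.symm) tendsto_const_nhds

lemma gaussQ_hasDerivAt (t : ℝ) : HasDerivAt gaussQ (-phi t) t := by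
  have key : ∀ s : ℝ, gaussQ s = gaussQ 0 - ∫ x in (0:ℝ)..s, phi x := by
    intro s
    have h1 : (∫ x in Set.Iic s, phi x) - ∫ x in Set.Iic (0:ℝ), phi x = ∫ x in (0:ℝ)..s, phi x :=
      intervalIntegral.integral_Iic_sub_Iic phi_integrable.integrableOn phi_integrable.integrableOn
    have h2 : ∀ u : ℝ, gaussQ u = (∫ x, phi x) - ∫ x in Set.Iic u, phi x := by
      intro u
      have := integral_add_compl (measurableSet_Iic (a := u)) phi_integrable
      rw [Set.compl_Iic] at this
      rw [gaussQ_eq]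
      linarith [this]
    rw [h2 s, h2 0, ← h1]; ring
  have hd : HasDerivAt (fun s => gaussQ 0 - ∫ x in (0:ℝ)..s, phi x) (-phi t) t := by
    have : HasDerivAt (fun s => ∫ x in (0:ℝ)..s, phi x) (phi t) t := by
      apply intervalIntegral.integral_hasDerivAt_right
        phi_integrable.intervalIntegrable
        (phi_integrable.aestronglyMeasurable.stronglyMeasurableAtFilter)
        (Continuous.continuousAt (by unfold phi; continuity))
    simpa using this.const_sub (gaussQ 0)
  rw [funext key]; exact hd

lemma gaussQ_continuous : Continuous gaussQ :=
  continuous_iff_continuousAt.2 fun t => (gaussQ_hasDerivAt t).continuousAt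

lemma gaussQ_antitone : Antitone gaussQ := fun s t hst => by
  rw [gaussQ_eq, gaussQ_eq]
  exact setIntegral_mono_set phi_integrable.integrableOn
    (Filter.Eventually.of_forall fun x => (phi_pos x).le)
    ((Set.Ioi_subset_Ioi hst).eventuallyLE)

lemma key_identity (γ : ℝ) (hγ : 1 ≤ γ) {r : ℝ} (hr : r ≠ 0) :
    γ * phi (Real.log γ / r + r / 2) = phi (Real.log γ / r - r / 2) := by
  set a := Real.log γ with ha
  have hγ0 : 0 < γ := lt_of_lt_of_le one_pos hγ
  have hexp : γ = Real.exp a := (Real.exp_log hγ0).symm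
  unfold phi
  rw [hexp, ← mul_assoc, mul_comm (Real.exp a), mul_assoc, ← Real.exp_add]
  congr 1
  field_simp
  ring

lemma theta_hasDerivAt (γ : ℝ) (hγ : 1 ≤ γ) {r : ℝ} (hr : r ≠ 0) :
    HasDerivAt (fun r => thetaGamma γ r) (phi (Real.log γ / r - r / 2)) r := by
  set a := Real.log γ with ha
  have hD1 : HasDerivAt (fun r : ℝ => a / r - r / 2) (a * -(r^2)⁻¹ - 1/2) r := by
    simp only [div_eq_mul_inv]
    exact (((hasDerivAt_inv hr).const_mul a).sub ((hasDerivAt_id r).div_const 2)).congr_deriv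
      (by simp [div_eq_mul_inv])
  have hD2 : HasDerivAt (fun r : ℝ => a / r + r / 2) (a * -(r^2)⁻¹ + 1/2) r := by
    simp only [div_eq_mul_inv]
    exact (((hasDerivAt_inv hr).const_mul a).add ((hasDerivAt_id r).div_const 2)).congr_deriv
      (by simp [div_eq_mul_inv])
  have h1 : HasDerivAt (fun r : ℝ => gaussQ (a / r - r / 2))
      (-phi (a / r - r / 2) * (a * -(r^2)⁻¹ - 1/2)) r :=
    (gaussQ_hasDerivAt _).comp r hD1
  have h2 : HasDerivAt (fun r : ℝ => γ * gaussQ (a / r + r / 2))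
      (γ * (-phi (a / r + r / 2) * (a * -(r^2)⁻¹ + 1/2))) r :=
    ((gaussQ_hasDerivAt _).comp r hD2).const_mul γ
  have h := h1.sub h2
  have key := key_identity γ hγ hr
  rw [← ha] at key
  refine (h : HasDerivAt (fun r => thetaGamma γ r) _ r).congr_deriv ?_
  rw [show γ * (-phi (a / r + r / 2) * (a * -(r ^ 2)⁻¹ + 1/2))
      = -(γ * phi (a / r + r / 2)) * (a * -(r ^ 2)⁻¹ + 1/2) by ring, key]
  ring

lemma theta_monotone (γ : ℝ) (hγ : 1 ≤ γ) :
    MonotoneOn (fun r => thetaGamma γ r) (Set.Ioi (0 : ℝ)) := by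
  have := strictMonoOn_of_hasDerivWithinAt_pos (convex_Ioi (0:ℝ))
    (f := fun r => thetaGamma γ r) (f' := fun r => phi (Real.log γ / r - r / 2))
    (fun x hx => ((theta_hasDerivAt γ hγ (ne_of_gt hx)).continuousAt).continuousWithinAt)
    (fun x hx => by
      rw [interior_Ioi] at hx
      exact (theta_hasDerivAt γ hγ (ne_of_gt hx)).hasDerivWithinAt)
    (fun x hx => phi_pos _)
  exact this.monotoneOn

lemma theta_le_one (γ : ℝ) (hγ : 1 ≤ γ) (r : ℝ) : thetaGamma γ r ≤ 1 := by
  unfold thetaGamma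
  have h1 := gaussQ_le_one (Real.log γ / r - r / 2)
  have h2 := gaussQ_nonneg (Real.log γ / r + r / 2)
  nlinarith

lemma theta_tendsto_zero (γ : ℝ) (hγ : 1 < γ) :
    Tendsto (fun r => thetaGamma γ r) (nhdsWithin 0 (Set.Ioi 0)) (nhds 0) := by
  set a := Real.log γ with ha
  have ha0 : 0 < a := Real.log_pos hγ
  have hinv : Tendsto (fun r : ℝ => a / r) (nhdsWithin 0 (Set.Ioi 0)) atTop := by
    simp only [div_eq_mul_inv]
    exact tendsto_inv_nhdsGT_zero.const_mul_atTop ha0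
  have hhalf : Tendsto (fun r : ℝ => r / 2) (nhdsWithin 0 (Set.Ioi 0)) (nhds 0) := by
    have h : Tendsto (fun r : ℝ => r / 2) (nhds (0:ℝ)) (nhds ((0:ℝ)/2)) :=
      ((continuous_id (X := ℝ)).div_const 2).tendsto 0
    rw [zero_div] at h
    exact h.mono_left nhdsWithin_le_nhds
  have ht1 : Tendsto (fun r : ℝ => a / r - r / 2) (nhdsWithin 0 (Set.Ioi 0)) atTop :=
    (hinv.atTop_add hhalf.neg).congr fun r => by ring
  have ht2 : Tendsto (fun r : ℝ => a / r + r / 2) (nhdsWithin 0 (Set.Ioi 0)) atTop :=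
    hinv.atTop_add hhalf
  have h1 : Tendsto (fun r => gaussQ (a / r - r / 2)) (nhdsWithin 0 (Set.Ioi 0)) (nhds 0) :=
    gaussQ_tendsto_atTop.comp ht1
  have h2 : Tendsto (fun r => γ * gaussQ (a / r + r / 2)) (nhdsWithin 0 (Set.Ioi 0)) (nhds 0) := by
    have := (gaussQ_tendsto_atTop.comp ht2).const_mul γ
    simpa using this
  have := h1.sub h2
  rw [sub_zero] at this; exact this

lemma theta_nonneg (γ : ℝ) (hγ : 1 ≤ γ) {r : ℝ} (hr : 0 < r) : 0 ≤ thetaGamma γ r := by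
  rcases eq_or_lt_of_le hγ with h1 | h1
  · unfold thetaGamma
    rw [← h1]
    simp only [Real.log_one, zero_div, one_mul, zero_sub, zero_add]
    have := gaussQ_antitone (show -(r/2) ≤ r/2 by linarith)
    linarith
  · refine le_of_tendsto (theta_tendsto_zero γ h1) ?_
    have hmem : Set.Ioo (0:ℝ) r ∈ nhdsWithin (0:ℝ) (Set.Ioi 0) := by
      apply mem_nhdsWithin.2
      exact ⟨Set.Iio r, isOpen_Iio, hr, by
        intro x hx
        exact ⟨hx.2, hx.1⟩⟩
    filter_upwards [hmem] with s hs
    exact theta_monotone γ hγ hs.1 hr (le_of_lt hs.2)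

lemma theta_tendsto_one (γ : ℝ) (hγ : 1 ≤ γ) :
    Tendsto (fun r => thetaGamma γ r) atTop (nhds 1) := by
  clear hγ
  set a := Real.log γ with ha
  have hconst : Tendsto (fun r : ℝ => a / r) atTop (nhds 0) := by
    simpa [div_eq_mul_inv] using tendsto_inv_atTop_zero.const_mul a
  have hhalf : Tendsto (fun r : ℝ => r / 2) atTop atTop :=
    tendsto_id.atTop_div_const two_pos
  have ht1 : Tendsto (fun r : ℝ => a / r - r / 2) atTop atBot := by
    have := hconst.add_atBot (tendsto_neg_atTop_atBot.comp hhalf)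
    exact this.congr fun r => by simp [sub_eq_add_neg]
  have ht2 : Tendsto (fun r : ℝ => a / r + r / 2) atTop atTop :=
    hconst.add_atTop hhalf
  have h1 : Tendsto (fun r => gaussQ (a / r - r / 2)) atTop (nhds 1) :=
    gaussQ_tendsto_atBot.comp ht1
  have h2 : Tendsto (fun r => γ * gaussQ (a / r + r / 2)) atTop (nhds 0) := by
    have := (gaussQ_tendsto_atTop.comp ht2).const_mul γ
    simpa using this
  have := h1.sub h2
  rw [sub_zero] at this; exact this

/-- For every fixed `γ ≥ 1`, the function `θ_γ` is nondecreasing on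
`(0, ∞)`, takes values in `[0, 1]` there, and tends to `1` as `r → ∞`. -/
theorem thetaGamma_monotone_mem_tendsto (γ : ℝ) (hγ : 1 ≤ γ) :
    MonotoneOn (fun r => thetaGamma γ r) (Set.Ioi (0 : ℝ)) ∧
    (∀ r ∈ Set.Ioi (0 : ℝ), thetaGamma γ r ∈ Set.Icc (0 : ℝ) 1) ∧
    Filter.Tendsto (fun r => thetaGamma γ r) Filter.atTop (nhds 1) :=
  ⟨theta_monotone γ hγ, fun r hr => ⟨theta_nonneg γ hγ hr, theta_le_one γ hγ r⟩,
    theta_tendsto_one γ hγ⟩
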